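/- Let R be a nontrivial commutative ring, let Λ = Λ_N(R) be the exterior algebra of the free module R^N over R, and let m, n ≥ 1. Let g = (p q; r s) be a block matrix over Λ where p is m×m and s is n×n with all entries in the even part of Λ, and q is m×n and r is n×m with all entries in the odd part of Λ. Assume p and s are invertible as matrices over the even part of Λ (a commutative subring of Λ). Then det(p − q·s⁻¹·r), computed in the commutative even subring, is a unit; consequently the Berezinian Ber(g) = det(p − q·s⁻¹·r) · (det s)⁻¹ is a unit of Λ. -/

import Mathlib

/-- The even part of the exterior algebra: the sum of the homogeneous components of even
exterior degree. -/
noncomputable def evenPart (R : Type*) [CommRing R] (M : Type*) [AddCommGroup M]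
    [Module R M] : Submodule R (ExteriorAlgebra R M) :=
  ⨆ i : ℕ, LinearMap.range (ExteriorAlgebra.ι R (M := M)) ^ (2 * i)

/-- The odd part of the exterior algebra: the sum of the homogeneous components of odd
exterior degree. -/
noncomputable def oddPart (R : Type*) [CommRing R] (M : Type*) [AddCommGroup M]
    [Module R M] : Submodule R (ExteriorAlgebra R M) :=
  ⨆ i : ℕ, LinearMap.range (ExteriorAlgebra.ι R (M := M)) ^ (2 * i + 1)

/-- The determinant of a square matrix with entries in a (possibly noncommutative) ring,
given by the Leibniz formula; for a matrix whose entries lie in a commutative subring this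
is the determinant computed in that subring. -/
noncomputable def detLeibniz {Λ : Type*} [Ring Λ] {n : ℕ}
    (M : Matrix (Fin n) (Fin n) Λ) : Λ :=
  ∑ σ : Equiv.Perm (Fin n),
    (Equiv.Perm.sign σ : ℤ) • (List.ofFn fun i => M (σ i) i).prod

namespace BerAux

variable {R : Type*} [CommRing R] {M : Type*} [AddCommGroup M] [Module R M]

local notation "GP" => LinearMap.range (ExteriorAlgebra.ι R (M := M))

lemma iota_mul_pow (m : M) {j : ℕ} {y : ExteriorAlgebra R M} (hy : y ∈ GP ^ j) :
    ExteriorAlgebra.ι R m * y = ((-1 : ℤ) ^ j) • (y * ExteriorAlgebra.ι R m) := by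
  refine Submodule.pow_induction_on_left' (M := GP)
    (C := fun j y _ => ExteriorAlgebra.ι R m * y
      = ((-1 : ℤ) ^ j) • (y * ExteriorAlgebra.ι R m)) ?_ ?_ ?_ hy
  · intro r
    simp [(Algebra.commutes r (ExteriorAlgebra.ι R m)).symm]
  · intro x y i hx hy ihx ihy
    simp [mul_add, add_mul, ihx, ihy, smul_add]
  · rintro x ⟨v, rfl⟩ i z hz ih
    have swap : ExteriorAlgebra.ι R m * ExteriorAlgebra.ι R v
        = -(ExteriorAlgebra.ι R v * ExteriorAlgebra.ι R m) :=
      eq_neg_of_add_eq_zero_left (ExteriorAlgebra.ι_add_mul_swap m v)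
    rw [← mul_assoc, swap, neg_mul, mul_assoc, ih, mul_smul_comm, ← mul_assoc,
      pow_succ, mul_smul]
    simp

lemma pow_mul_pow_comm {i j : ℕ} {x y : ExteriorAlgebra R M}
    (hx : x ∈ GP ^ i) (hy : y ∈ GP ^ j) :
    x * y = ((-1 : ℤ) ^ (i * j)) • (y * x) := by
  revert j y hy
  show ∀ (j : ℕ) (y : ExteriorAlgebra R M), y ∈ GP ^ j → x * y = ((-1 : ℤ) ^ (i * j)) • (y * x)
  refine Submodule.pow_induction_on_left' (M := GP)
    (C := fun i x _ => ∀ (j : ℕ) (y : ExteriorAlgebra R M), y ∈ GP ^ j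
      → x * y = ((-1 : ℤ) ^ (i * j)) • (y * x)) ?_ ?_ ?_ hx
  · intro r j y _; simp [Algebra.commutes r y]
  · intro x z i hx hz ihx ihz j y hy
    simp [add_mul, mul_add, ihx j y hy, ihz j y hy, smul_add]
  · rintro xx ⟨v, rfl⟩ i z hz ih j y hy
    rw [mul_assoc, ih j y hy, mul_smul_comm, ← mul_assoc, iota_mul_pow v hy,
      smul_mul_assoc, smul_smul, ← pow_add, mul_assoc]
    congr 2
    rw [Nat.succ_eq_add_one]
    ring

lemma evenPart_comm {x y : ExteriorAlgebra R M}
    (hx : x ∈ evenPart R M) (hy : y ∈ evenPart R M) : x * y = y * x := by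
  refine Submodule.iSup_induction _ (motive := fun x => x * y = y * x) hx ?_ (by simp)
    (fun a b ha hb => by rw [add_mul, mul_add, ha, hb])
  intro i x hxi
  refine Submodule.iSup_induction _ (motive := fun y => x * y = y * x) hy ?_ (by simp)
    (fun a b ha hb => by rw [add_mul, mul_add, ha, hb])
  intro j y hyj
  rw [pow_mul_pow_comm hxi hyj]
  have : Even (2 * i * (2 * j)) := ⟨i * (2 * j), by ring⟩
  rw [this.neg_one_pow, one_smul]

lemma mul_mem_of_le {f g : ℕ → ℕ} {T : Submodule R (ExteriorAlgebra R M)}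
    (hT : ∀ i j : ℕ, (GP ^ f i * GP ^ g j : Submodule R (ExteriorAlgebra R M)) ≤ T)
    {x y : ExteriorAlgebra R M}
    (hx : x ∈ ⨆ i, GP ^ f i) (hy : y ∈ ⨆ j, GP ^ g j) : x * y ∈ T := by
  refine Submodule.iSup_induction _ (motive := fun x => x * y ∈ T) hx ?_
    (by simpa using T.zero_mem) (fun a b ha hb => by simpa [add_mul] using T.add_mem ha hb)
  intro i x hxi
  refine Submodule.iSup_induction _ (motive := fun y => x * y ∈ T) hy ?_
    (by simpa using T.zero_mem) (fun a b ha hb => by simpa [mul_add] using T.add_mem ha hb)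
  intro j y hyj
  exact hT i j (Submodule.mul_mem_mul hxi hyj)

lemma pow_le_iSup {f : ℕ → ℕ} (a b : ℕ) (k : ℕ) (hk : a + b = f k) :
    (GP ^ a * GP ^ b : Submodule R (ExteriorAlgebra R M)) ≤ ⨆ i, GP ^ f i := by
  rw [← pow_add, hk]
  exact le_iSup (fun i => GP ^ f i) k

/-- the "degree ≥ k" part -/
noncomputable def lowPart (R : Type*) [CommRing R] (M : Type*) [AddCommGroup M]
    [Module R M] (k : ℕ) : Submodule R (ExteriorAlgebra R M) :=
  ⨆ i : ℕ, LinearMap.range (ExteriorAlgebra.ι R (M := M)) ^ (i + k)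

lemma even_mul_even {x y : ExteriorAlgebra R M} (hx : x ∈ evenPart R M)
    (hy : y ∈ evenPart R M) : x * y ∈ evenPart R M :=
  mul_mem_of_le (fun i j => pow_le_iSup _ _ (i + j) (by ring)) hx hy

lemma odd_mul_even {x y : ExteriorAlgebra R M} (hx : x ∈ oddPart R M)
    (hy : y ∈ evenPart R M) : x * y ∈ oddPart R M :=
  mul_mem_of_le (fun i j => pow_le_iSup _ _ (i + j) (by ring)) hx hy

lemma odd_mul_odd {x y : ExteriorAlgebra R M} (hx : x ∈ oddPart R M)
    (hy : y ∈ oddPart R M) : x * y ∈ evenPart R M :=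
  mul_mem_of_le (fun i j => pow_le_iSup _ _ (i + j + 1) (by ring)) hx hy

lemma odd_mul_odd_low {x y : ExteriorAlgebra R M} (hx : x ∈ oddPart R M)
    (hy : y ∈ oddPart R M) : x * y ∈ lowPart R M 2 :=
  mul_mem_of_le (fun i j => pow_le_iSup _ _ (2 * i + 2 * j) (by ring)) hx hy

lemma even_mul_low {k : ℕ} {x y : ExteriorAlgebra R M} (hx : x ∈ evenPart R M)
    (hy : y ∈ lowPart R M k) : x * y ∈ lowPart R M k :=
  mul_mem_of_le (fun i j => pow_le_iSup _ _ (2 * i + j) (by ring)) hx hy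

lemma low_mul_low {a b : ℕ} {x y : ExteriorAlgebra R M} (hx : x ∈ lowPart R M a)
    (hy : y ∈ lowPart R M b) : x * y ∈ lowPart R M (a + b) :=
  mul_mem_of_le (fun i j => pow_le_iSup _ _ (i + j) (by ring)) hx hy

lemma one_mem_evenPart : (1 : ExteriorAlgebra R M) ∈ evenPart R M :=
  Submodule.mem_iSup_of_mem 0 (by rw [mul_zero, pow_zero]; exact Submodule.one_le.mp le_rfl)

end BerAux

namespace BerAux

variable {R : Type*} [CommRing R] {M : Type*} [AddCommGroup M] [Module R M]

local notation "GP" => LinearMap.range (ExteriorAlgebra.ι R (M := M))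

lemma range_iota_pow_succ_bot (R : Type*) [CommRing R] (NN : ℕ) :
    (LinearMap.range (ExteriorAlgebra.ι R (M := Fin NN → R))) ^ (NN + 1) = ⊥ := by
  set e := Pi.basisFun R (Fin NN)
  have hP : LinearMap.range (ExteriorAlgebra.ι R (M := Fin NN → R))
      = Submodule.span R (Set.range fun i : Fin NN => ExteriorAlgebra.ι R (e i)) := by
    rw [LinearMap.range_eq_map, ← e.span_eq, Submodule.map_span, ← Set.range_comp]
    rfl
  rw [hP, Submodule.span_pow, eq_bot_iff, Submodule.span_le]
  intro x hx
  obtain ⟨f, rfl⟩ := Set.mem_pow.mp hx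
  choose g hg using fun i => (f i).2
  obtain ⟨a, b, hab, hgab⟩ := Fintype.exists_ne_map_eq_of_card_lt g (by simp)
  have hfn : (fun i => ((f i : ExteriorAlgebra R (Fin NN → R))))
      = fun i => ExteriorAlgebra.ι R (e (g i)) := funext fun i => (hg i).symm
  have hprod : (List.ofFn fun i => ((f i : ExteriorAlgebra R (Fin NN → R)))).prod
      = ExteriorAlgebra.ιMulti R (NN + 1) (fun i => e (g i)) := by
    rw [hfn, ExteriorAlgebra.ιMulti_apply]
  rw [SetLike.mem_coe, Submodule.mem_bot, hprod]
  exact AlternatingMap.map_eq_zero_of_eq _ _ (by rw [hgab]) hab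

lemma range_iota_pow_bot (R : Type*) [CommRing R] (NN : ℕ) {d : ℕ} (hd : NN < d) :
    (LinearMap.range (ExteriorAlgebra.ι R (M := Fin NN → R))) ^ d = ⊥ := by
  obtain ⟨t, rfl⟩ := Nat.exists_eq_add_of_le (Nat.succ_le_of_lt hd)
  rw [pow_add, range_iota_pow_succ_bot, Submodule.bot_mul]

lemma lowPart_eq_bot (R : Type*) [CommRing R] (NN : ℕ) {k : ℕ} (hk : NN < k) :
    lowPart R (Fin NN → R) k = ⊥ := by
  refine le_bot_iff.mp (iSup_le fun i => ?_)
  rw [range_iota_pow_bot R NN (lt_of_lt_of_le hk (by omega))]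

lemma pow_mem_lowPart {z : ExteriorAlgebra R M} (hz : z ∈ lowPart R M 2) :
    ∀ k : ℕ, z ^ (k + 1) ∈ lowPart R M (2 * k + 2)
  | 0 => by simpa using hz
  | (k + 1) => by
    have := low_mul_low (pow_mem_lowPart hz k) hz
    rw [← pow_succ] at this
    rw [show 2 * (k + 1) + 2 = 2 * k + 2 + 2 by ring]
    exact this

lemma nilpotent_of_lowPart_two (R : Type*) [CommRing R] (NN : ℕ)
    {z : ExteriorAlgebra R (Fin NN → R)} (hz : z ∈ lowPart R (Fin NN → R) 2) :
    z ^ (NN + 1) = 0 := by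
  have h := pow_mem_lowPart hz NN
  rw [lowPart_eq_bot R NN (by omega), Submodule.mem_bot] at h
  exact h

/-- The even part as a subalgebra. -/
noncomputable def evenAlg (R : Type*) [CommRing R] (M : Type*) [AddCommGroup M]
    [Module R M] : Subalgebra R (ExteriorAlgebra R M) :=
  (evenPart R M).toSubalgebra one_mem_evenPart (fun _ _ hx hy => even_mul_even hx hy)

noncomputable instance (R : Type*) [CommRing R] (M : Type*) [AddCommGroup M]
    [Module R M] : CommRing (evenAlg R M) :=
  { (inferInstance : Ring (evenAlg R M)) with
    mul_comm := fun a b => Subtype.ext (evenPart_comm a.2 b.2) }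

lemma detLeibniz_map {A : Type*} [CommRing A] {L : Type*} [Ring L] (f : A →+* L) {k : ℕ}
    (N : Matrix (Fin k) (Fin k) A) :
    detLeibniz (N.map f) = f N.det := by
  rw [Matrix.det_apply, map_sum, detLeibniz]
  refine Finset.sum_congr rfl fun σ _ => ?_
  rw [Units.smul_def, map_zsmul]
  congr 1
  have : (List.ofFn fun i => (N.map f) (σ i) i) = List.map f (List.ofFn fun i => N (σ i) i) := by
    rw [List.map_ofFn]
    rfl
  rw [this, ← map_list_prod f, List.prod_ofFn]

end BerAux

set_option maxHeartbeats 4000000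
set_option synthInstance.maxHeartbeats 400000
open BerAux

/-- The Berezinian of an invertible supermatrix is a unit (Example 3.3 of the paper): if
`g = (p q; r s)` has even diagonal blocks `p, s` invertible over the commutative even
subring (with even inverses `p', s'`) and odd off-diagonal blocks, then
`det(p − q·s⁻¹·r)` is a unit, and hence `Ber(g) = det(p − q·s⁻¹·r)·(det s)⁻¹` is a unit
of the Grassmann algebra. -/
theorem berezinian_isUnit (R : Type*) [CommRing R] [Nontrivial R] (NN m n : ℕ)
    (hm : 1 ≤ m) (hn : 1 ≤ n)
    (p p' : Matrix (Fin m) (Fin m) (ExteriorAlgebra R (Fin NN → R)))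
    (q : Matrix (Fin m) (Fin n) (ExteriorAlgebra R (Fin NN → R)))
    (r : Matrix (Fin n) (Fin m) (ExteriorAlgebra R (Fin NN → R)))
    (s s' : Matrix (Fin n) (Fin n) (ExteriorAlgebra R (Fin NN → R)))
    (hp : ∀ i j, p i j ∈ evenPart R (Fin NN → R))
    (hp' : ∀ i j, p' i j ∈ evenPart R (Fin NN → R))
    (hs : ∀ i j, s i j ∈ evenPart R (Fin NN → R))
    (hs' : ∀ i j, s' i j ∈ evenPart R (Fin NN → R))
    (hq : ∀ i j, q i j ∈ oddPart R (Fin NN → R))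
    (hr : ∀ i j, r i j ∈ oddPart R (Fin NN → R))
    (hpp' : p * p' = 1) (hp'p : p' * p = 1)
    (hss' : s * s' = 1) (hs's : s' * s = 1) :
    IsUnit (detLeibniz (p - q * s' * r)) ∧
    IsUnit (detLeibniz (p - q * s' * r) * Ring.inverse (detLeibniz s)) := by
  classical
  let E := evenAlg R (Fin NN → R)
  let f : E →+* ExteriorAlgebra R (Fin NN → R) := (Subalgebra.val E).toRingHom
  let pE : Matrix (Fin m) (Fin m) E := fun i j => ⟨p i j, hp i j⟩
  let p'E : Matrix (Fin m) (Fin m) E := fun i j => ⟨p' i j, hp' i j⟩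
  let sE : Matrix (Fin n) (Fin n) E := fun i j => ⟨s i j, hs i j⟩
  let s'E : Matrix (Fin n) (Fin n) E := fun i j => ⟨s' i j, hs' i j⟩
  have hqs' : ∀ i k, (q * s') i k ∈ oddPart R (Fin NN → R) := fun i k => by
    rw [Matrix.mul_apply]
    exact Submodule.sum_mem _ fun l _ => odd_mul_even (hq i l) (hs' l k)
  have hY : ∀ i j, (q * s' * r) i j ∈ evenPart R (Fin NN → R) := fun i j => by
    rw [Matrix.mul_apply]
    exact Submodule.sum_mem _ fun k _ => odd_mul_odd (hqs' i k) (hr k j)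
  have hY2 : ∀ i j, (q * s' * r) i j ∈ lowPart R (Fin NN → R) 2 := fun i j => by
    rw [Matrix.mul_apply]
    exact Submodule.sum_mem _ fun k _ => odd_mul_odd_low (hqs' i k) (hr k j)
  let YE : Matrix (Fin m) (Fin m) E := fun i j => ⟨(q * s' * r) i j, hY i j⟩
  have hinj : ∀ {k : ℕ} (A B : Matrix (Fin k) (Fin k) E),
      f.mapMatrix A = f.mapMatrix B → A = B := by
    intro k A B h
    ext i j
    have h2 : f (A i j) = f (B i j) := by
      have := congrArg
        (fun (X : Matrix (Fin k) (Fin k) (ExteriorAlgebra R (Fin NN → R))) => X i j) h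
      simpa [RingHom.mapMatrix_apply, Matrix.map_apply] using this
    exact h2
  have hFp : f.mapMatrix pE = p := by ext i j; rfl
  have hFp' : f.mapMatrix p'E = p' := by ext i j; rfl
  have hFs : f.mapMatrix sE = s := by ext i j; rfl
  have hFs' : f.mapMatrix s'E = s' := by ext i j; rfl
  have hFY : f.mapMatrix YE = q * s' * r := by ext i j; rfl
  have hpE : pE * p'E = 1 := hinj _ _ (by rw [map_mul, hFp, hFp', hpp', map_one])
  have hsE : sE * s'E = 1 := hinj _ _ (by rw [map_mul, hFs, hFs', hss', map_one])
  let XE : Matrix (Fin m) (Fin m) E := p'E * YE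
  have hFX : f.mapMatrix XE = p' * (q * s' * r) := by
    show f.mapMatrix (p'E * YE) = _
    rw [map_mul, hFp', hFY]
  have hXcoe : ∀ i j, f (XE i j) = (p' * (q * s' * r)) i j := by
    intro i j
    calc f (XE i j) = (f.mapMatrix XE) i j := rfl
      _ = (p' * (q * s' * r)) i j := by rw [hFX]
  have hXnil : ∀ i j, IsNilpotent (XE i j) := by
    intro i j
    have hmem : f (XE i j) ∈ lowPart R (Fin NN → R) 2 := by
      rw [hXcoe i j, Matrix.mul_apply]
      exact Submodule.sum_mem _ fun k _ => even_mul_low (hp' i k) (hY2 k j)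
    refine ⟨NN + 1, Subtype.ext ?_⟩
    have : f (XE i j) ^ (NN + 1) = 0 := nilpotent_of_lowPart_two R NN hmem
    exact this
  have hdetp : IsUnit pE.det :=
    IsUnit.of_mul_eq_one p'E.det (by rw [← Matrix.det_mul, hpE, Matrix.det_one])
  have hdets : IsUnit sE.det :=
    IsUnit.of_mul_eq_one s'E.det (by rw [← Matrix.det_mul, hsE, Matrix.det_one])
  let mk := Ideal.Quotient.mk (nilradical E)
  have hmkX : mk.mapMatrix XE = 0 := by
    ext i j
    simp only [RingHom.mapMatrix_apply, Matrix.map_apply, Matrix.zero_apply]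
    rw [Ideal.Quotient.eq_zero_iff_mem, mem_nilradical]
    exact hXnil i j
  have hmk1 : mk ((1 - XE).det) = 1 := by
    rw [RingHom.map_det, map_sub, map_one, hmkX, sub_zero, Matrix.det_one]
  have hnil : IsNilpotent ((1 - XE).det - 1) := by
    have h0 : mk ((1 - XE).det - 1) = 0 := by rw [map_sub, hmk1, map_one, sub_self]
    exact mem_nilradical.mp (Ideal.Quotient.eq_zero_iff_mem.mp h0)
  have hdet1X : IsUnit (1 - XE).det := by
    have := hnil.isUnit_add_one
    simpa using this
  have hD : ∀ i j, (p - q * s' * r) i j ∈ evenPart R (Fin NN → R) := fun i j => by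
    rw [Matrix.sub_apply]
    exact Submodule.sub_mem _ (hp i j) (hY i j)
  let DE : Matrix (Fin m) (Fin m) E := fun i j => ⟨(p - q * s' * r) i j, hD i j⟩
  have hFD : f.mapMatrix DE = p - q * s' * r := by ext i j; rfl
  have hDE' : DE = pE - YE := hinj _ _ (by rw [hFD, map_sub, hFp, hFY])
  have hDE : pE - YE = pE * (1 - XE) := by
    refine hinj _ _ ?_
    rw [map_sub, map_mul, map_sub, map_one, hFp, hFY, hFX,
      mul_sub, mul_one, ← mul_assoc, hpp', one_mul]
  have hdetD : IsUnit DE.det := by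
    rw [hDE', hDE, Matrix.det_mul]; exact hdetp.mul hdet1X
  have harg : (p - q * s' * r) = DE.map f := by ext i j; rfl
  have e1 : detLeibniz (p - q * s' * r) = f DE.det := by
    rw [harg]; exact detLeibniz_map f _
  have hargs : s = sE.map f := by ext i j; rfl
  have e2 : detLeibniz s = f sE.det := by rw [hargs]; exact detLeibniz_map f _
  have u1 : IsUnit (detLeibniz (p - q * s' * r)) := by rw [e1]; exact hdetD.map f
  refine ⟨u1, ?_⟩
  have u2 : IsUnit (detLeibniz s) := by rw [e2]; exact hdets.map f
  obtain ⟨u, hu⟩ := u2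
  rw [← hu, Ring.inverse_unit]
  exact u1.mul u⁻¹.isUnit
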